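/- Let K be a field and q_1,...,q_n ∈ K \ {0,1}. In the multiparameter quantized Weyl algebra A_n^{q̄,Λ}(K) with all λ_{ij} = 1, the elements z_i := 1 + ∑_{k=1}^i (q_k - 1) y_k x_k satisfy z_i z_j = z_j z_i for all i,j, and z_j y_i = y_i z_j if j < i while z_j y_i = q_i y_i z_j if j ≥ i. -/

import Mathlib

/-- In the multiparameter quantized Weyl algebra `A_n^{q̄,Λ}(K)` with all `λ_{ij} = 1`
(presented here by its generators and relations inside any `K`-algebra `A`), the
elements `z_i = 1 + ∑_{k≤i} (q_k - 1) y_k x_k` commute with each other, commute with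
`y_i` when `j < i`, and satisfy `z_j y_i = q_i y_i z_j` when `j ≥ i`. -/
theorem multiparam_qWeyl_z_relations (K : Type*) [Field K] (n : ℕ)
    (q : Fin n → K) (hq : ∀ i, q i ≠ 0 ∧ q i ≠ 1)
    (A : Type*) [Ring A] [Algebra K A] (x y : Fin n → A)
    (hyy : ∀ i j, y i * y j = y j * y i)
    (hxx : ∀ i j, i < j → x i * x j = q i • (x j * x i))
    (hxy_lt : ∀ i j, i < j → x i * y j = y j * x i)
    (hxy_gt : ∀ i j, j < i → x i * y j = q j • (y j * x i))
    (hxyi : ∀ i, x i * y i - q i • (y i * x i) =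
      1 + ∑ k ∈ Finset.univ.filter (· < i), (q k - 1) • (y k * x k)) :
    let z : Fin n → A := fun i =>
      1 + ∑ k ∈ Finset.univ.filter (· ≤ i), (q k - 1) • (y k * x k)
    (∀ i j, z i * z j = z j * z i) ∧
      (∀ i j : Fin n, j < i → z j * y i = y i * z j) ∧
      (∀ i j : Fin n, i ≤ j → z j * y i = q i • (y i * z j)) := by
  intro z
  classical
  set t : Fin n → A := fun k => (q k - 1) • (y k * x k) with ht
  set w : Fin n → A := fun i => 1 + ∑ k ∈ Finset.univ.filter (· < i), t k with hw
  have hz : ∀ i, z i = 1 + ∑ k ∈ Finset.univ.filter (· ≤ i), t k := fun i => rfl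
  have hq0 : ∀ k : Fin n, q k ≠ 0 := fun k => (hq k).1
  have hxyi' : ∀ i, x i * y i = w i + q i • (y i * x i) := by
    intro i
    have h := hxyi i
    rw [sub_eq_iff_eq_add] at h
    rw [h, hw]
  -- t k commutes with y i when k < i
  have hty_lt : ∀ (i k : Fin n), k < i → t k * y i = y i * t k := by
    intro i k hki
    simp only [ht, smul_mul_assoc, mul_smul_comm]
    congr 1
    calc y k * x k * y i = y k * (x k * y i) := mul_assoc _ _ _
      _ = y k * (y i * x k) := by rw [hxy_lt k i hki]
      _ = y k * y i * x k := (mul_assoc _ _ _).symm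
      _ = y i * y k * x k := by rw [hyy]
      _ = y i * (y k * x k) := mul_assoc _ _ _
  have hty_gt : ∀ (i k : Fin n), i < k → t k * y i = q i • (y i * t k) := by
    intro i k hik
    simp only [ht, smul_mul_assoc, mul_smul_comm]
    rw [smul_comm]
    congr 1
    calc y k * x k * y i = y k * (x k * y i) := mul_assoc _ _ _
      _ = y k * (q i • (y i * x k)) := by rw [hxy_gt k i hik]
      _ = q i • (y k * y i * x k) := by rw [mul_smul_comm, mul_assoc]
      _ = q i • (y i * y k * x k) := by rw [hyy]
      _ = q i • (y i * (y k * x k)) := by rw [mul_assoc]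
  have hwy : ∀ i, w i * y i = y i * w i := by
    intro i
    rw [hw]
    simp only [add_mul, one_mul, mul_add, mul_one, Finset.sum_mul, Finset.mul_sum]
    congr 1
    refine Finset.sum_congr rfl fun k hk => ?_
    exact hty_lt i k (by simpa using hk)
  have hxx' : ∀ (k m : Fin n), m < k → x k * x m = (q m)⁻¹ • (x m * x k) := by
    intro k m h
    rw [hxx m k h, inv_smul_smul₀ (hq0 m)]
  have htx_lt : ∀ (k m : Fin n), m < k → x k * t m = t m * x k := by
    intro k m h
    simp only [ht, smul_mul_assoc, mul_smul_comm]
    congr 1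
    calc x k * (y m * x m) = x k * y m * x m := (mul_assoc _ _ _).symm
      _ = (q m • (y m * x k)) * x m := by rw [hxy_gt k m h]
      _ = q m • (y m * (x k * x m)) := by rw [smul_mul_assoc, mul_assoc]
      _ = q m • (y m * ((q m)⁻¹ • (x m * x k))) := by rw [hxx' k m h]
      _ = (q m * (q m)⁻¹) • (y m * (x m * x k)) := by rw [mul_smul_comm, smul_smul]
      _ = y m * (x m * x k) := by rw [mul_inv_cancel₀ (hq0 m), one_smul]
      _ = y m * x m * x k := (mul_assoc _ _ _).symm
  have htx_gt : ∀ (k m : Fin n), k < m → x k * t m = q k • (t m * x k) := by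
    intro k m h
    simp only [ht, smul_mul_assoc, mul_smul_comm]
    rw [smul_comm]
    congr 1
    calc x k * (y m * x m) = x k * y m * x m := (mul_assoc _ _ _).symm
      _ = y m * x k * x m := by rw [hxy_lt k m h]
      _ = y m * (x k * x m) := mul_assoc _ _ _
      _ = y m * (q k • (x m * x k)) := by rw [hxx k m h]
      _ = q k • (y m * x m * x k) := by rw [mul_smul_comm, ← mul_assoc]
  have hwx : ∀ k, x k * w k = w k * x k := by
    intro k
    rw [hw]
    simp only [add_mul, one_mul, mul_add, mul_one, Finset.sum_mul, Finset.mul_sum]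
    congr 1
    refine Finset.sum_congr rfl fun m hm => ?_
    exact htx_lt k m (by simpa using hm)
  have hsplit : ∀ i j : Fin n, i ≤ j →
      z j = w i + t i + ∑ k ∈ Finset.univ.filter (fun k => i < k ∧ k ≤ j), t k := by
    intro i j hij
    have h1 : Finset.univ.filter (· ≤ j) =
        (insert i (Finset.univ.filter (· < i))) ∪
          (Finset.univ.filter (fun k => i < k ∧ k ≤ j)) := by
      ext k
      simp only [Finset.mem_filter, Finset.mem_univ, true_and, Finset.mem_union,
        Finset.mem_insert, Fin.lt_def, Fin.le_def]
      have := Fin.le_def.mp hij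
      constructor
      · intro hk
        rcases lt_trichotomy (k : ℕ) (i : ℕ) with h | h | h
        · exact Or.inl (Or.inr h)
        · exact Or.inl (Or.inl (Fin.ext h))
        · exact Or.inr ⟨h, hk⟩
      · rintro (h | h)
        · rcases h with h | h
          · subst h; exact this
          · omega
        · exact h.2
    have hdisj : Disjoint (insert i (Finset.univ.filter (· < i)))
        (Finset.univ.filter (fun k => i < k ∧ k ≤ j)) := by
      rw [Finset.disjoint_left]
      intro a ha hb
      simp only [Finset.mem_insert, Finset.mem_filter, Finset.mem_univ, true_and] at ha hb
      rcases ha with h | h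
      · subst h; exact absurd hb.1 (lt_irrefl _)
      · exact absurd (h.trans hb.1) (lt_irrefl _)
    have hi : i ∉ Finset.univ.filter (· < i) := by simp
    rw [hz, h1, Finset.sum_union hdisj, Finset.sum_insert hi, hw]
    simp only [add_assoc, add_left_comm, add_comm]
  -- main commutation with y
  have hzy : ∀ i j : Fin n, i ≤ j → z j * y i = q i • (y i * z j) := by
    intro i j hij
    set SM := ∑ k ∈ Finset.univ.filter (fun k => i < k ∧ k ≤ j), t k with hSM
    have hzj := hsplit i j hij
    have h2 : t i * y i = (q i - 1) • (y i * w i + q i • (y i * (y i * x i))) := by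
      simp only [ht, smul_mul_assoc]
      congr 1
      calc y i * x i * y i = y i * (x i * y i) := mul_assoc _ _ _
        _ = y i * (w i + q i • (y i * x i)) := by rw [hxyi' i]
        _ = y i * w i + q i • (y i * (y i * x i)) := by rw [mul_add, mul_smul_comm]
    have h3 : SM * y i = q i • (y i * SM) := by
      rw [hSM, Finset.sum_mul, Finset.mul_sum, Finset.smul_sum]
      refine Finset.sum_congr rfl fun k hk => ?_
      exact hty_gt i k (Finset.mem_filter.mp hk).2.1
    calc z j * y i = w i * y i + t i * y i + SM * y i := by rw [hzj, add_mul, add_mul]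
      _ = y i * w i + (q i - 1) • (y i * w i + q i • (y i * (y i * x i)))
            + q i • (y i * SM) := by rw [hwy i, h2, h3]
      _ = q i • (y i * (w i + t i + SM)) := by
          simp only [ht, mul_add, mul_smul_comm, smul_add]
          module
      _ = q i • (y i * z j) := by rw [hzj]
  have hxz : ∀ (k j : Fin n), k ≤ j → x k * z j = q k • (z j * x k) := by
    intro k j hkj
    set SM := ∑ m ∈ Finset.univ.filter (fun m => k < m ∧ m ≤ j), t m with hSM
    have hzj := hsplit k j hkj
    have h2 : x k * t k = (q k - 1) • (w k * x k + q k • (y k * x k * x k)) := by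
      simp only [ht, mul_smul_comm]
      congr 1
      calc x k * (y k * x k) = x k * y k * x k := (mul_assoc _ _ _).symm
        _ = (w k + q k • (y k * x k)) * x k := by rw [hxyi' k]
        _ = w k * x k + q k • (y k * x k * x k) := by rw [add_mul, smul_mul_assoc]
    have h3 : x k * SM = q k • (SM * x k) := by
      rw [hSM, Finset.mul_sum, Finset.sum_mul, Finset.smul_sum]
      refine Finset.sum_congr rfl fun m hm => ?_
      exact htx_gt k m (Finset.mem_filter.mp hm).2.1
    calc x k * z j = x k * w k + x k * t k + x k * SM := by rw [hzj, mul_add, mul_add]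
      _ = w k * x k + (q k - 1) • (w k * x k + q k • (y k * x k * x k))
            + q k • (SM * x k) := by rw [hwx k, h2, h3]
      _ = q k • ((w k + t k + SM) * x k) := by
          simp only [ht, add_mul, smul_mul_assoc, smul_add]
          module
      _ = q k • (z j * x k) := by rw [hzj]
  have htz : ∀ (k j : Fin n), k ≤ j → t k * z j = z j * t k := by
    intro k j hkj
    have hy : y k * z j = (q k)⁻¹ • (z j * y k) := by
      rw [hzy k j hkj, inv_smul_smul₀ (hq0 k)]
    simp only [ht, smul_mul_assoc, mul_smul_comm]
    congr 1
    calc y k * x k * z j = y k * (x k * z j) := mul_assoc _ _ _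
      _ = y k * (q k • (z j * x k)) := by rw [hxz k j hkj]
      _ = q k • (y k * z j * x k) := by rw [mul_smul_comm, mul_assoc]
      _ = q k • (((q k)⁻¹ • (z j * y k)) * x k) := by rw [hy]
      _ = (q k * (q k)⁻¹) • (z j * y k * x k) := by rw [smul_mul_assoc, smul_smul]
      _ = z j * y k * x k := by rw [mul_inv_cancel₀ (hq0 k), one_smul]
      _ = z j * (y k * x k) := mul_assoc _ _ _
  have hzz : ∀ i j : Fin n, i ≤ j → z i * z j = z j * z i := by
    intro i j hij
    calc z i * z j = (1 + ∑ k ∈ Finset.univ.filter (· ≤ i), t k) * z j := by rw [hz i]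
      _ = z j + ∑ k ∈ Finset.univ.filter (· ≤ i), t k * z j := by
          rw [add_mul, one_mul, Finset.sum_mul]
      _ = z j + ∑ k ∈ Finset.univ.filter (· ≤ i), z j * t k := by
          congr 1
          refine Finset.sum_congr rfl fun k hk => ?_
          exact htz k j (le_trans (Finset.mem_filter.mp hk).2 hij)
      _ = z j * (1 + ∑ k ∈ Finset.univ.filter (· ≤ i), t k) := by
          rw [mul_add, mul_one, Finset.mul_sum]
      _ = z j * z i := by rw [hz i]
  have hzy_lt : ∀ i j : Fin n, j < i → z j * y i = y i * z j := by
    intro i j hji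
    calc z j * y i = (1 + ∑ k ∈ Finset.univ.filter (· ≤ j), t k) * y i := by rw [hz j]
      _ = y i + ∑ k ∈ Finset.univ.filter (· ≤ j), t k * y i := by
          rw [add_mul, one_mul, Finset.sum_mul]
      _ = y i + ∑ k ∈ Finset.univ.filter (· ≤ j), y i * t k := by
          congr 1
          refine Finset.sum_congr rfl fun k hk => ?_
          exact hty_lt i k (lt_of_le_of_lt (Finset.mem_filter.mp hk).2 hji)
      _ = y i * (1 + ∑ k ∈ Finset.univ.filter (· ≤ j), t k) := by
          rw [mul_add, mul_one, Finset.mul_sum]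
      _ = y i * z j := by rw [hz j]
  refine ⟨fun i j => ?_, hzy_lt, fun i j h => hzy i j h⟩
  rcases le_total i j with h | h
  · exact hzz i j h
  · exact (hzz j i h).symm
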